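/- Let m ≥ 1 be an integer and let x ∈ ℂ with x + n ≠ 0 for every integer 0 ≤ n ≤ m. Then exp of the derivative at w = 0 of the function w ↦ Σ_{n=0}^{m} (−1)^n · C(m,n) · (x+n)^{−w} equals Π_{n=0}^{m} (x+n)^{(−1)^{n+1} C(m,n)}, where each factor is an integer power (zpow) of the nonzero complex number x+n. -/

import Mathlib

open Complex

theorem multiple_gamma_negative_order (m : ℕ) (hm : 1 ≤ m) (x : ℂ)
    (hx : ∀ n ≤ m, x + (n : ℂ) ≠ 0) :
    Complex.exp (deriv
        (fun w : ℂ => ∑ n ∈ Finset.range (m + 1),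
          (-1 : ℂ) ^ n * (m.choose n : ℂ) * (x + (n : ℂ)) ^ (-w)) 0) =
    ∏ n ∈ Finset.range (m + 1),
      (x + (n : ℂ)) ^ ((-1 : ℤ) ^ (n + 1) * (m.choose n : ℤ)) := by
  have key : ∀ n ∈ Finset.range (m + 1),
      HasDerivAt (fun w : ℂ => (-1 : ℂ) ^ n * (m.choose n : ℂ) * (x + (n : ℂ)) ^ (-w))
        ((-1 : ℂ) ^ n * (m.choose n : ℂ) * (-(Complex.log (x + (n : ℂ))))) 0 := by
    intro n hn
    have hc := hx n (Nat.lt_succ_iff.mp (Finset.mem_range.mp hn))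
    have h1 : (fun w : ℂ => (x + (n : ℂ)) ^ (-w)) =
        fun w => Complex.exp (Complex.log (x + (n : ℂ)) * (-w)) := by
      funext w; rw [Complex.cpow_def_of_ne_zero hc]
    have h2 : HasDerivAt (fun w : ℂ => Complex.log (x + (n : ℂ)) * (-w))
        (-(Complex.log (x + (n : ℂ)))) 0 := by
      simpa using ((hasDerivAt_id (0 : ℂ)).neg.const_mul (Complex.log (x + (n : ℂ))))
    have h3 := h2.cexp
    simp only [neg_zero, mul_zero, Complex.exp_zero, one_mul] at h3
    rw [← h1] at h3
    exact h3.const_mul _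
  have hsum := HasDerivAt.fun_sum key
  rw [hsum.deriv, Complex.exp_sum]
  refine Finset.prod_congr rfl fun n hn => ?_
  have hc := hx n (Nat.lt_succ_iff.mp (Finset.mem_range.mp hn))
  have : (-1 : ℂ) ^ n * (m.choose n : ℂ) * (-(Complex.log (x + (n : ℂ)))) =
      (((-1 : ℤ) ^ (n + 1) * (m.choose n : ℤ) : ℤ) : ℂ) * Complex.log (x + (n : ℂ)) := by
    push_cast
    ring
  rw [this, Complex.exp_int_mul, Complex.exp_log hc]
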